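/- Let G and H be connected finite simple graphs of order n₁ ≥ 2 and n₂ ≥ 2, with maximum degrees Δ₁ and Δ₂, respectively. If Δ₁ ≠ n₁ − 1 or Δ₂ ≠ n₂ − 1, then dim_s(G + H) = n₁ + n₂ − ϖ(G) − ϖ(H), and moreover dim_s(G + H) ≥ dim_s(G) + dim_s(H). -/

import Mathlib

open SimpleGraph

/-- A vertex `w` strongly resolves the pair `u`, `v` if `v` lies on some shortest `u`–`w`
path or `u` lies on some shortest `v`–`w` path. -/
def StronglyResolves {V : Type*} (G : SimpleGraph V) (w u v : V) : Prop :=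
  G.dist u w = G.dist u v + G.dist v w ∨ G.dist v w = G.dist v u + G.dist u w

/-- `S` is a strong resolving set for `G` if every pair of distinct vertices is strongly
resolved by some vertex of `S`. -/
def IsStrongResolvingSet {V : Type*} (G : SimpleGraph V) (S : Set V) : Prop :=
  ∀ u v : V, u ≠ v → ∃ w ∈ S, StronglyResolves G w u v

/-- The strong metric dimension: the minimum cardinality of a strong resolving set. -/
noncomputable def strongDim {V : Type*} (G : SimpleGraph V) [Fintype V] : ℕ :=
  sInf {k | ∃ S : Finset V, IsStrongResolvingSet G ↑S ∧ S.card = k}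

/-- The closed neighborhood of a vertex. -/
def closedNbhd {V : Type*} (G : SimpleGraph V) (v : V) : Set V :=
  insert v (G.neighborSet v)

/-- A twin-free clique: a clique containing no pair of true twins. -/
def IsTwinFreeClique {V : Type*} (G : SimpleGraph V) (X : Finset V) : Prop :=
  G.IsClique ↑X ∧ ∀ u ∈ X, ∀ v ∈ X, u ≠ v → closedNbhd G u ≠ closedNbhd G v

/-- The twin-free clique number: maximum cardinality of a twin-free clique. -/
noncomputable def twinFreeCliqueNum {V : Type*} (G : SimpleGraph V) [Fintype V] : ℕ :=
  sSup {k | ∃ X : Finset V, IsTwinFreeClique G X ∧ X.card = k}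

/-- Adjacency relation of the join of two graphs. -/
def joinAdj {V W : Type*} (G : SimpleGraph V) (H : SimpleGraph W) :
    V ⊕ W → V ⊕ W → Prop
  | Sum.inl a, Sum.inl b => G.Adj a b
  | Sum.inr a, Sum.inr b => H.Adj a b
  | Sum.inl _, Sum.inr _ => True
  | Sum.inr _, Sum.inl _ => True

/-- The join `G + H`: disjoint union of `G` and `H` plus all edges between them. -/
def joinGraph {V W : Type*} (G : SimpleGraph V) (H : SimpleGraph W) :
    SimpleGraph (V ⊕ W) where
  Adj := joinAdj G H
  symm := by
    constructor
    rintro (a | a) (b | b) h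
    · exact G.adj_symm h
    · trivial
    · trivial
    · exact H.adj_symm h
  loopless := by
    constructor
    rintro (a | a) h
    · exact G.loopless.1 a h
    · exact H.loopless.1 a h

/-- Adjacency relation of the corona product `G ⊙ H`. -/
def coronaAdj {V W : Type*} (G : SimpleGraph V) (H : SimpleGraph W) :
    V ⊕ V × W → V ⊕ V × W → Prop
  | Sum.inl a, Sum.inl b => G.Adj a b
  | Sum.inr p, Sum.inr q => p.1 = q.1 ∧ H.Adj p.2 q.2
  | Sum.inl a, Sum.inr q => a = q.1
  | Sum.inr p, Sum.inl b => p.1 = b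

/-- The corona product `G ⊙ H`: one copy of `G` and one copy of `H` for each vertex of
`G`, with the `i`-th vertex of `G` joined to every vertex of the `i`-th copy of `H`. -/
def corona {V W : Type*} (G : SimpleGraph V) (H : SimpleGraph W) :
    SimpleGraph (V ⊕ V × W) where
  Adj := coronaAdj G H
  symm := by
    constructor
    rintro (a | p) (b | q) h
    · exact G.adj_symm h
    · exact h.symm
    · exact h.symm
    · exact ⟨h.1.symm, H.adj_symm h.2⟩
  loopless := by
    constructor
    rintro (a | p) h
    · exact G.loopless.1 a h
    · exact H.loopless.1 p.2 h.2

/-- The disjoint union of copies of `H`, one copy for each element of `V`. -/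
def copies (V : Type*) {W : Type*} (H : SimpleGraph W) : SimpleGraph (V × W) where
  Adj p q := p.1 = q.1 ∧ H.Adj p.2 q.2
  symm := ⟨fun _ _ h => ⟨h.1.symm, h.2.symm⟩⟩
  loopless := ⟨fun p h => H.loopless.1 p.2 h.2⟩

/-- The algebraic connectivity: the second smallest eigenvalue (with multiplicity,
in nondecreasing order) of the Laplacian matrix. -/
noncomputable def algebraicConnectivity {V : Type*} (G : SimpleGraph V) [Fintype V]
    [DecidableEq V] [DecidableRel G.Adj] : ℝ :=
  (((Finset.univ.val.map ((G.posSemidef_lapMatrix ℝ).isHermitian.eigenvalues)).sort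
    (· ≤ ·)).getD 1 0)

section MyAux

variable {V W : Type*}

lemma mem_closedNbhd_iff {G : SimpleGraph V} {u x : V} :
    x ∈ closedNbhd G u ↔ (x = u ∨ G.Adj u x) := by
  simp [closedNbhd]

lemma exists_distinguisher {G : SimpleGraph V} {u v : V} (hadj : G.Adj u v)
    (hne : closedNbhd G u ≠ closedNbhd G v) :
    ∃ x, x ≠ u ∧ x ≠ v ∧ ((G.Adj u x ∧ ¬ G.Adj v x) ∨ (G.Adj v x ∧ ¬ G.Adj u x)) := by
  have h1 : ∃ x, ¬ (x ∈ closedNbhd G u ↔ x ∈ closedNbhd G v) := by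
    by_contra hc
    push_neg at hc
    exact hne (Set.ext hc)
  obtain ⟨x, hx⟩ := h1
  have hxu : x ≠ u := by
    rintro rfl
    exact hx (by simp [mem_closedNbhd_iff, hadj.symm])
  have hxv : x ≠ v := by
    rintro rfl
    exact hx (by simp [mem_closedNbhd_iff, hadj])
  rw [mem_closedNbhd_iff, mem_closedNbhd_iff] at hx
  simp only [hxu, hxv, false_or] at hx
  refine ⟨x, hxu, hxv, ?_⟩
  by_cases h : G.Adj u x
  · exact Or.inl ⟨h, fun h' => hx ⟨fun _ => h', fun _ => h⟩⟩
  · refine Or.inr ⟨?_, h⟩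
    by_contra h'
    exact hx ⟨fun hh => absurd hh h, fun hh => absurd hh h'⟩

lemma dist_eq_two_of {G : SimpleGraph V} (hconn : G.Connected) {x y : V}
    (hne : x ≠ y) (hnadj : ¬ G.Adj x y) (hle : G.dist x y ≤ 2) : G.dist x y = 2 := by
  have h0 := hconn.pos_dist_of_ne hne
  have h1 : G.dist x y ≠ 1 := fun hd => hnadj (SimpleGraph.dist_eq_one_iff_adj.mp hd)
  omega

/-- In any connected graph, the complement of a twin-free clique is a
strong resolving set. -/
lemma compl_tfc_isSRS {G : SimpleGraph V} [Fintype V] [DecidableEq V]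
    (hconn : G.Connected) {X : Finset V} (hX : IsTwinFreeClique G X) :
    IsStrongResolvingSet G ↑(Xᶜ) := by
  intro u v huv
  by_cases hu : u ∈ X
  · by_cases hv : v ∈ X
    · have hadj : G.Adj u v := hX.1 (by exact_mod_cast hu) (by exact_mod_cast hv) huv
      have duv : G.dist u v = 1 := SimpleGraph.dist_eq_one_iff_adj.mpr hadj
      have dvu : G.dist v u = 1 := SimpleGraph.dist_eq_one_iff_adj.mpr hadj.symm
      obtain ⟨x, hxu, hxv, hx⟩ := exists_distinguisher hadj (hX.2 u hu v hv huv)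
      rcases hx with ⟨h1, h2⟩ | ⟨h1, h2⟩
      · -- Adj u x, ¬ Adj v x
        have hxX : x ∉ X := fun hxX =>
          h2 (hX.1 (by exact_mod_cast hv) (by exact_mod_cast hxX) (Ne.symm hxv))
        refine ⟨x, by simpa using hxX, Or.inr ?_⟩
        have dux : G.dist u x = 1 := SimpleGraph.dist_eq_one_iff_adj.mpr h1
        have hle : G.dist v x ≤ 2 := by
          calc G.dist v x ≤ G.dist v u + G.dist u x := hconn.dist_triangle
          _ = 2 := by rw [dvu, dux]
        have := dist_eq_two_of hconn (Ne.symm hxv) (fun ha => h2 ha) hle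
        rw [this, dvu, dux]
      · -- Adj v x, ¬ Adj u x
        have hxX : x ∉ X := fun hxX =>
          h2 (hX.1 (by exact_mod_cast hu) (by exact_mod_cast hxX) (Ne.symm hxu))
        refine ⟨x, by simpa using hxX, Or.inl ?_⟩
        have dvx : G.dist v x = 1 := SimpleGraph.dist_eq_one_iff_adj.mpr h1
        have hle : G.dist u x ≤ 2 := by
          calc G.dist u x ≤ G.dist u v + G.dist v x := hconn.dist_triangle
          _ = 2 := by rw [duv, dvx]
        have := dist_eq_two_of hconn (Ne.symm hxu) (fun ha => h2 ha) hle
        rw [this, duv, dvx]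
    · exact ⟨v, by simpa using hv, Or.inl (by simp [SimpleGraph.dist_self])⟩
  · exact ⟨u, by simpa using hu, Or.inr (by simp [SimpleGraph.dist_self])⟩

/-- In a connected graph of diameter at most 2, the complement of a strong
resolving set is a twin-free clique. -/
lemma srs_compl_tfc {G : SimpleGraph V} [Fintype V] [DecidableEq V]
    (hconn : G.Connected) (hdiam : ∀ x y, G.dist x y ≤ 2) {S : Finset V}
    (hS : IsStrongResolvingSet G ↑S) : IsTwinFreeClique G Sᶜ := by
  have hres : ∀ x y : V, x ∈ Sᶜ → y ∈ Sᶜ → x ≠ y → G.Adj x y := by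
    intro x y hx hy hne
    by_contra hnadj
    obtain ⟨w, hwS, hw⟩ := hS x y hne
    have d2 : G.dist x y = 2 := dist_eq_two_of hconn hne hnadj (hdiam x y)
    have hwx : w ≠ x := by rintro rfl; simp at hx; exact hx hwS
    have hwy : w ≠ y := by rintro rfl; simp at hy; exact hy hwS
    have hxw := hdiam x w
    have hyw := hdiam y w
    have hpx := hconn.pos_dist_of_ne (Ne.symm hwx)
    have hpy := hconn.pos_dist_of_ne (Ne.symm hwy)
    have d2' : G.dist y x = 2 := by rw [SimpleGraph.dist_comm]; exact d2
    rcases hw with hw | hw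
    · rw [d2] at hw; omega
    · rw [d2'] at hw; omega
  constructor
  · intro x hx y hy hne
    exact hres x y (by exact_mod_cast hx) (by exact_mod_cast hy) hne
  · intro x hx y hy hne hEq
    have hadj : G.Adj x y := hres x y hx hy hne
    obtain ⟨w, hwS, hw⟩ := hS x y hne
    have hwx : w ≠ x := by rintro rfl; simp at hx; exact hx hwS
    have hwy : w ≠ y := by rintro rfl; simp at hy; exact hy hwS
    have hiff : G.Adj x w ↔ G.Adj y w := by
      have h1 := Set.ext_iff.mp hEq w
      rw [mem_closedNbhd_iff, mem_closedNbhd_iff] at h1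
      simpa [hwx, hwy] using h1
    have dxy : G.dist x y = 1 := SimpleGraph.dist_eq_one_iff_adj.mpr hadj
    have dyx : G.dist y x = 1 := SimpleGraph.dist_eq_one_iff_adj.mpr hadj.symm
    have hdd : G.dist x w = G.dist y w := by
      by_cases ha : G.Adj x w
      · rw [SimpleGraph.dist_eq_one_iff_adj.mpr ha,
          SimpleGraph.dist_eq_one_iff_adj.mpr (hiff.mp ha)]
      · have hb : ¬ G.Adj y w := fun hb => ha (hiff.mpr hb)
        rw [dist_eq_two_of hconn (Ne.symm hwx) ha (hdiam x w),
          dist_eq_two_of hconn (Ne.symm hwy) hb (hdiam y w)]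
    have hpx := hconn.pos_dist_of_ne (Ne.symm hwx)
    rcases hw with hw | hw
    · rw [dxy, hdd] at hw; omega
    · rw [dyx, ← hdd] at hw; omega

lemma tfc_empty (G : SimpleGraph V) : IsTwinFreeClique G (∅ : Finset V) := by
  constructor
  · simp
  · simp

lemma tfcSet_nonempty (G : SimpleGraph V) [Fintype V] :
    {k | ∃ X : Finset V, IsTwinFreeClique G X ∧ X.card = k}.Nonempty :=
  ⟨0, ∅, tfc_empty G, rfl⟩

lemma tfcSet_bddAbove (G : SimpleGraph V) [Fintype V] :
    BddAbove {k | ∃ X : Finset V, IsTwinFreeClique G X ∧ X.card = k} :=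
  ⟨Fintype.card V, by rintro k ⟨X, -, rfl⟩; exact X.card_le_univ⟩

lemma tfcNum_le_card (G : SimpleGraph V) [Fintype V] :
    twinFreeCliqueNum G ≤ Fintype.card V :=
  csSup_le (tfcSet_nonempty G) (by rintro k ⟨X, -, rfl⟩; exact X.card_le_univ)

lemma exists_max_tfc (G : SimpleGraph V) [Fintype V] :
    ∃ X : Finset V, IsTwinFreeClique G X ∧ X.card = twinFreeCliqueNum G :=
  Nat.sSup_mem (tfcSet_nonempty G) (tfcSet_bddAbove G)

lemma card_mem_tfc {G : SimpleGraph V} [Fintype V] {X : Finset V}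
    (hX : IsTwinFreeClique G X) : X.card ≤ twinFreeCliqueNum G :=
  le_csSup (tfcSet_bddAbove G) ⟨X, hX, rfl⟩

lemma strongDim_le_card_sub (G : SimpleGraph V) [Fintype V] [DecidableEq V]
    (hconn : G.Connected) :
    strongDim G ≤ Fintype.card V - twinFreeCliqueNum G := by
  obtain ⟨X, hX, hcard⟩ := exists_max_tfc G
  have : (Fintype.card V - twinFreeCliqueNum G) ∈
      {k | ∃ S : Finset V, IsStrongResolvingSet G ↑S ∧ S.card = k} :=
    ⟨Xᶜ, compl_tfc_isSRS hconn hX, by rw [Finset.card_compl, hcard]⟩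
  exact Nat.sInf_le this

lemma card_sub_le_strongDim (G : SimpleGraph V) [Fintype V] [DecidableEq V]
    (hconn : G.Connected) (hdiam : ∀ x y, G.dist x y ≤ 2) :
    Fintype.card V - twinFreeCliqueNum G ≤ strongDim G := by
  have hnonempty : {k | ∃ S : Finset V, IsStrongResolvingSet G ↑S ∧ S.card = k}.Nonempty := by
    refine ⟨Fintype.card V, Finset.univ, ?_, Finset.card_univ⟩
    have := compl_tfc_isSRS hconn (tfc_empty G)
    simpa using this
  obtain ⟨S, hS, hcard⟩ := Nat.sInf_mem hnonempty
  have h1 : Sᶜ.card ≤ twinFreeCliqueNum G := card_mem_tfc (srs_compl_tfc hconn hdiam hS)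
  rw [Finset.card_compl] at h1
  have h2 : S.card ≤ Fintype.card V := S.card_le_univ
  have : strongDim G = S.card := hcard.symm
  omega
end MyAux


section JoinAux

variable {V W : Type*} {G : SimpleGraph V} {H : SimpleGraph W}

lemma joinAdj_inl_inl {a b : V} : (joinGraph G H).Adj (Sum.inl a) (Sum.inl b) ↔ G.Adj a b :=
  Iff.rfl

lemma joinAdj_inr_inr {a b : W} : (joinGraph G H).Adj (Sum.inr a) (Sum.inr b) ↔ H.Adj a b :=
  Iff.rfl

lemma joinAdj_inl_inr (a : V) (b : W) : (joinGraph G H).Adj (Sum.inl a) (Sum.inr b) :=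
  trivial

lemma joinAdj_inr_inl (a : W) (b : V) : (joinGraph G H).Adj (Sum.inr a) (Sum.inl b) :=
  trivial

lemma join_connected [Nonempty V] [Nonempty W] : (joinGraph G H).Connected := by
  rw [SimpleGraph.connected_iff]
  refine ⟨?_, ⟨Sum.inl (Classical.arbitrary V)⟩⟩
  have key : ∀ (a : V) (b : W), (joinGraph G H).Reachable (Sum.inl a) (Sum.inr b) :=
    fun a b => (joinAdj_inl_inr a b).reachable
  rintro (a | a) (b | b)
  · exact (key a (Classical.arbitrary W)).trans (key b (Classical.arbitrary W)).symm
  · exact key a b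
  · exact (key b a).symm
  · exact ((key (Classical.arbitrary V) a).symm).trans (key (Classical.arbitrary V) b)

lemma join_dist_le_two [Nonempty V] [Nonempty W] (x y : V ⊕ W) :
    (joinGraph G H).dist x y ≤ 2 := by
  rcases x with a | a <;> rcases y with b | b
  · exact SimpleGraph.dist_le (SimpleGraph.Walk.cons (joinAdj_inl_inr a (Classical.arbitrary W))
      (SimpleGraph.Walk.cons (joinAdj_inr_inl (Classical.arbitrary W) b) SimpleGraph.Walk.nil))
  · have h1 : (joinGraph G H).dist (Sum.inl a) (Sum.inr b) ≤ 1 :=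
      SimpleGraph.dist_le (SimpleGraph.Walk.cons (joinAdj_inl_inr a b) SimpleGraph.Walk.nil)
    omega
  · have h1 : (joinGraph G H).dist (Sum.inr a) (Sum.inl b) ≤ 1 :=
      SimpleGraph.dist_le (SimpleGraph.Walk.cons (joinAdj_inr_inl a b) SimpleGraph.Walk.nil)
    omega
  · exact SimpleGraph.dist_le (SimpleGraph.Walk.cons (joinAdj_inr_inl a (Classical.arbitrary V))
      (SimpleGraph.Walk.cons (joinAdj_inl_inr (Classical.arbitrary V) b) SimpleGraph.Walk.nil))

lemma closedNbhd_join_inl_iff {u v : V} :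
    closedNbhd (joinGraph G H) (Sum.inl u) = closedNbhd (joinGraph G H) (Sum.inl v) ↔
      closedNbhd G u = closedNbhd G v := by
  constructor
  · intro hEq
    ext x
    have := Set.ext_iff.mp hEq (Sum.inl x)
    rw [mem_closedNbhd_iff, mem_closedNbhd_iff] at this
    rw [mem_closedNbhd_iff, mem_closedNbhd_iff]
    simpa [joinAdj_inl_inl, Sum.inl.injEq] using this
  · intro hEq
    ext x
    rcases x with x | x
    · have := Set.ext_iff.mp hEq x
      rw [mem_closedNbhd_iff, mem_closedNbhd_iff] at this
      rw [mem_closedNbhd_iff, mem_closedNbhd_iff]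
      simpa [joinAdj_inl_inl, Sum.inl.injEq] using this
    · simp [mem_closedNbhd_iff, joinAdj_inl_inr]

lemma closedNbhd_join_inr_iff {u v : W} :
    closedNbhd (joinGraph G H) (Sum.inr u) = closedNbhd (joinGraph G H) (Sum.inr v) ↔
      closedNbhd H u = closedNbhd H v := by
  constructor
  · intro hEq
    ext x
    have := Set.ext_iff.mp hEq (Sum.inr x)
    rw [mem_closedNbhd_iff, mem_closedNbhd_iff] at this
    rw [mem_closedNbhd_iff, mem_closedNbhd_iff]
    simpa [joinAdj_inr_inr, Sum.inr.injEq] using this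
  · intro hEq
    ext x
    rcases x with x | x
    · simp [mem_closedNbhd_iff, joinAdj_inr_inl]
    · have := Set.ext_iff.mp hEq x
      rw [mem_closedNbhd_iff, mem_closedNbhd_iff] at this
      rw [mem_closedNbhd_iff, mem_closedNbhd_iff]
      simpa [joinAdj_inr_inr, Sum.inr.injEq] using this

lemma tfcNum_join [Fintype V] [Fintype W] [DecidableEq V] [DecidableEq W]
    (hcross : ∀ (u : V) (v : W),
      closedNbhd (joinGraph G H) (Sum.inl u) ≠ closedNbhd (joinGraph G H) (Sum.inr v)) :
    twinFreeCliqueNum (joinGraph G H) = twinFreeCliqueNum G + twinFreeCliqueNum H := by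
  apply le_antisymm
  · -- ≤ : split a maximal twin-free clique of the join
    obtain ⟨Z, hZ, hcard⟩ := exists_max_tfc (joinGraph G H)
    have hX : IsTwinFreeClique G Z.toLeft := by
      constructor
      · intro a ha b hb hne
        have := hZ.1 (x := Sum.inl a) (by simpa using ha) (y := Sum.inl b) (by simpa using hb)
          (by simpa using hne)
        exact this
      · intro a ha b hb hne hEq
        exact hZ.2 (Sum.inl a) (by simpa using ha) (Sum.inl b) (by simpa using hb)
          (by simpa using hne) (closedNbhd_join_inl_iff.mpr hEq)
    have hY : IsTwinFreeClique H Z.toRight := by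
      constructor
      · intro a ha b hb hne
        have := hZ.1 (x := Sum.inr a) (by simpa using ha) (y := Sum.inr b) (by simpa using hb)
          (by simpa using hne)
        exact this
      · intro a ha b hb hne hEq
        exact hZ.2 (Sum.inr a) (by simpa using ha) (Sum.inr b) (by simpa using hb)
          (by simpa using hne) (closedNbhd_join_inr_iff.mpr hEq)
    calc twinFreeCliqueNum (joinGraph G H) = Z.card := hcard.symm
      _ = Z.toLeft.card + Z.toRight.card := (Finset.card_toLeft_add_card_toRight (u := Z)).symm
      _ ≤ twinFreeCliqueNum G + twinFreeCliqueNum H :=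
        Nat.add_le_add (card_mem_tfc hX) (card_mem_tfc hY)
  · -- ≥ : combine maximal twin-free cliques of the factors
    obtain ⟨X, hX, hcX⟩ := exists_max_tfc G
    obtain ⟨Y, hY, hcY⟩ := exists_max_tfc H
    have hZ : IsTwinFreeClique (joinGraph G H) (X.disjSum Y) := by
      constructor
      · rintro (a | a) ha (b | b) hb hne
        · exact hX.1 (by simpa using ha) (by simpa using hb) (by simpa using hne)
        · exact joinAdj_inl_inr a b
        · exact joinAdj_inr_inl a b
        · exact hY.1 (by simpa using ha) (by simpa using hb) (by simpa using hne)
      · rintro (a | a) ha (b | b) hb hne hEq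
        · exact hX.2 a (by simpa using ha) b (by simpa using hb) (by simpa using hne)
            (closedNbhd_join_inl_iff.mp hEq)
        · exact hcross a b hEq
        · exact hcross b a hEq.symm
        · exact hY.2 a (by simpa using ha) b (by simpa using hb) (by simpa using hne)
            (closedNbhd_join_inr_iff.mp hEq)
    have := card_mem_tfc hZ
    rwa [Finset.card_disjSum, hcX, hcY] at this

lemma no_universal [Fintype V] [DecidableEq V] [DecidableRel G.Adj]
    (hn : 2 ≤ Fintype.card V) (h : G.maxDegree ≠ Fintype.card V - 1) (u : V) :
    ∃ x, x ≠ u ∧ ¬ G.Adj u x := by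
  haveI : Nonempty V := Fintype.card_pos_iff.mp (by omega)
  by_contra hc
  push_neg at hc
  have huniv : insert u (G.neighborFinset u) = Finset.univ := by
    ext x
    simp only [Finset.mem_insert, SimpleGraph.mem_neighborFinset, Finset.mem_univ, iff_true]
    by_cases hx : x = u
    · exact Or.inl hx
    · exact Or.inr (hc x hx)
  have h1 : Fintype.card V ≤ G.degree u + 1 := by
    have h2 := Finset.card_insert_le u (G.neighborFinset u)
    rw [huniv, Finset.card_univ] at h2
    exact h2
  have h2 : G.degree u ≤ G.maxDegree := G.degree_le_maxDegree u
  have h3 : G.maxDegree < Fintype.card V := G.maxDegree_lt_card_verts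
  omega

end JoinAux

/-- If `G`, `H` are connected graphs of order `n₁, n₂ ≥ 2` with maximum
degrees `Δ₁ ≠ n₁ − 1` or `Δ₂ ≠ n₂ − 1`, then
`dim_s(G + H) = n₁ + n₂ − ϖ(G) − ϖ(H) ≥ dim_s(G) + dim_s(H)`. -/
theorem strongDim_join {V W : Type*} [Fintype V] [Fintype W]
    (G : SimpleGraph V) (H : SimpleGraph W) [DecidableRel G.Adj] [DecidableRel H.Adj]
    (hG : G.Connected) (hH : H.Connected)
    (hn1 : 2 ≤ Fintype.card V) (hn2 : 2 ≤ Fintype.card W)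
    (h : G.maxDegree ≠ Fintype.card V - 1 ∨ H.maxDegree ≠ Fintype.card W - 1) :
    strongDim (joinGraph G H) =
      Fintype.card V + Fintype.card W - twinFreeCliqueNum G - twinFreeCliqueNum H ∧
    strongDim G + strongDim H ≤ strongDim (joinGraph G H) := by
  classical
  haveI hne1 : Nonempty V := Fintype.card_pos_iff.mp (by omega)
  haveI hne2 : Nonempty W := Fintype.card_pos_iff.mp (by omega)
  have hJconn : (joinGraph G H).Connected := join_connected
  have hdiam := fun x y => join_dist_le_two (G := G) (H := H) x y
  have hcross : ∀ (u : V) (v : W),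
      closedNbhd (joinGraph G H) (Sum.inl u) ≠ closedNbhd (joinGraph G H) (Sum.inr v) := by
    rcases h with h | h
    · intro u v hEq
      obtain ⟨x, hxu, hxa⟩ := no_universal hn1 h u
      have h1 : Sum.inl x ∈ closedNbhd (joinGraph G H) (Sum.inr v) :=
        mem_closedNbhd_iff.mpr (Or.inr (joinAdj_inr_inl v x))
      rw [← hEq, mem_closedNbhd_iff] at h1
      rcases h1 with h1 | h1
      · exact hxu (Sum.inl_injective h1)
      · exact hxa (joinAdj_inl_inl.mp h1)
    · intro u v hEq
      obtain ⟨y, hyv, hya⟩ := no_universal hn2 h v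
      have h1 : Sum.inr y ∈ closedNbhd (joinGraph G H) (Sum.inl u) :=
        mem_closedNbhd_iff.mpr (Or.inr (joinAdj_inl_inr u y))
      rw [hEq, mem_closedNbhd_iff] at h1
      rcases h1 with h1 | h1
      · exact hyv (Sum.inr_injective h1)
      · exact hya (joinAdj_inr_inr.mp h1)
  have hϖJ := tfcNum_join (G := G) (H := H) hcross
  have e1 := strongDim_le_card_sub (joinGraph G H) hJconn
  have e2 := card_sub_le_strongDim (joinGraph G H) hJconn hdiam
  have hdG := strongDim_le_card_sub G hG
  have hdH := strongDim_le_card_sub H hH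
  have hbG := tfcNum_le_card G
  have hbH := tfcNum_le_card H
  have hbJ : twinFreeCliqueNum (joinGraph G H) ≤ Fintype.card (V ⊕ W) :=
    tfcNum_le_card _
  have hcardsum : Fintype.card (V ⊕ W) = Fintype.card V + Fintype.card W :=
    Fintype.card_sum
  constructor <;> omega
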